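/- For every n ≥ 1, there exists an n-path-universal word of length at most (n-1)(2^n - 1) + 1. Concretely, the word W := 1, u^1, u^2, …, u^{2^n - 1}, where u^k = 2,3,…,n for odd k and u^k = n-1, n-2, …, 1 for even k, is n-path-universal. -/

import Mathlib

/-- One asynchronous update step: replace coordinate `i` of `x` by `f x i`. -/
def updateStep {n : ℕ} (f : (Fin n → Bool) → (Fin n → Bool)) (x : Fin n → Bool)
    (i : Fin n) : Fin n → Bool :=
  Function.update x i (f x i)

/-- Action of a word on a state. -/
def applyWord {n : ℕ} (f : (Fin n → Bool) → (Fin n → Bool)) :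
    List (Fin n) → (Fin n → Bool) → (Fin n → Bool)
  | [], x => x
  | i :: w, x => applyWord f w (updateStep f x i)

/-- A word `w` fixes `f` if applying it to any state yields a fixed point of `f`. -/
def Fixes {n : ℕ} (f : (Fin n → Bool) → (Fin n → Bool)) (w : List (Fin n)) : Prop :=
  ∀ x, f (applyWord f w x) = applyWord f w x

/-- Arc of the asynchronous graph. -/
def AsyncArc {n : ℕ} (f : (Fin n → Bool) → (Fin n → Bool))
    (x y : Fin n → Bool) : Prop :=
  ∃ i : Fin n, f x i ≠ x i ∧ y = Function.update x i (f x i)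

/-- `w` is induced by a path of the `n`-cube. -/
def IsPathWord (n : ℕ) (w : List (Fin n)) : Prop :=
  ∃ xs : List (Fin n → Bool), xs.Nodup ∧ xs.length = w.length + 1 ∧
    ∀ k (hk : k < w.length),
      xs.getD (k + 1) default =
        Function.update (xs.getD k default) (w.get ⟨k, hk⟩)
          (!(xs.getD k default (w.get ⟨k, hk⟩)))

/-- `W` contains every `n`-path-word as a subword. -/
def PathUniversal (n : ℕ) (W : List (Fin n)) : Prop :=
  ∀ w : List (Fin n), IsPathWord n w → w.Sublist W

/-- The block `u^k` for odd `k`: letters `2, 3, …, n` (0-indexed: `1, …, n-1`). -/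
def upBlock (n : ℕ) : List (Fin n) := (List.finRange n).drop 1

/-- The block `u^k` for even `k`: letters `n-1, n-2, …, 1` (0-indexed: `n-2, …, 0`). -/
def downBlock (n : ℕ) : List (Fin n) := ((List.finRange n).take (n - 1)).reverse

/-- The word `W := 1, u^1, u^2, …, u^{2^n - 1}` with `u^k = 2,…,n` for odd `k`
and `u^k = n-1,…,1` for even `k`. -/
def zigzagWord (n : ℕ) : List (Fin n) :=
  (List.finRange n).take 1 ++
    (List.range (2 ^ n - 1)).flatMap (fun k => if k % 2 = 0 then upBlock n else downBlock n)

/-! ### Auxiliary machinery -/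

/-- Split off the maximal `R`-run from the front of a list. -/
def runSplit {α : Type*} (R : α → α → Prop) [DecidableRel R] : List α → List α × List α
  | [] => ([], [])
  | a :: t =>
    if t.head?.any (fun b => decide (R a b)) then
      (a :: (runSplit R t).1, (runSplit R t).2)
    else ([a], t)

lemma runSplit_append {α : Type*} (R : α → α → Prop) [DecidableRel R] (l : List α) :
    (runSplit R l).1 ++ (runSplit R l).2 = l := by
  induction l with
  | nil => simp [runSplit]
  | cons a t ih =>
    rw [runSplit]
    split
    · simpa using ih
    · simp

lemma runSplit_fst_cons {α : Type*} (R : α → α → Prop) [DecidableRel R] (a : α) (t : List α) :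
    ∃ r, (runSplit R (a :: t)).1 = a :: r := by
  rw [runSplit]; split
  · exact ⟨_, rfl⟩
  · exact ⟨[], rfl⟩

lemma runSplit_fst_chain {α : Type*} (R : α → α → Prop) [DecidableRel R] (l : List α) :
    List.Chain' R (runSplit R l).1 := by
  induction l with
  | nil => simp [runSplit, List.Chain']
  | cons a t ih =>
    rw [runSplit]
    split
    · next h =>
      cases t with
      | nil => simp at h
      | cons b t' =>
        simp only [List.head?_cons, Option.any_some, decide_eq_true_iff] at h
        obtain ⟨r, hr⟩ := runSplit_fst_cons R b t'
        rw [List.Chain', List.isChain_cons]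
        refine ⟨?_, ih⟩
        intro y hy
        rw [hr] at hy
        simp only [List.head?_cons, Option.mem_def, Option.some.injEq] at hy
        subst hy; exact h
    · simp [List.Chain']

lemma runSplit_boundary {α : Type*} (R : α → α → Prop) [DecidableRel R] (l : List α)
    (c : α) (s : List α) (h : (runSplit R l).2 = c :: s) :
    ∃ la, (runSplit R l).1.getLast? = some la ∧ ¬ R la c := by
  induction l with
  | nil => simp [runSplit] at h
  | cons a t ih =>
    by_cases hb : (t.head?.any fun b => decide (R a b)) = true
    · rw [runSplit, if_pos hb] at h ⊢
      simp only at h ⊢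
      obtain ⟨la, h1, h2⟩ := ih h
      refine ⟨la, ?_, h2⟩
      cases t with
      | nil => simp [runSplit] at h
      | cons b t' =>
        obtain ⟨r, hr⟩ := runSplit_fst_cons R b t'
        rw [hr] at h1 ⊢
        rw [List.getLast?_cons_cons, h1]
    · rw [runSplit, if_neg hb] at h ⊢
      simp only at h
      subst h
      simp only [List.head?_cons, Option.any_some, decide_eq_true_iff] at hb
      exact ⟨a, by simp, hb⟩

/-- A strictly increasing list of naturals in `[a, b)` is a sublist of `range' a (b - a)`. -/
lemma natInc : ∀ (l : List ℕ) (a b : ℕ), List.Pairwise (· < ·) l →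
    (∀ x ∈ l, a ≤ x ∧ x < b) → l.Sublist (List.range' a (b - a)) := by
  intro l
  induction l with
  | nil => intro a b _ _; exact List.nil_sublist _
  | cons x t ih =>
    intro a b hp hm
    obtain ⟨hax, hxb⟩ := hm x (by simp)
    rw [List.pairwise_cons] at hp
    have ht : t.Sublist (List.range' (x + 1) (b - (x + 1))) := by
      refine ih (x + 1) b hp.2 ?_
      intro y hy
      exact ⟨hp.1 y hy, (hm y (by simp [hy])).2⟩
    have e1 : List.range' a (x - a) ++ List.range' (a + 1 * (x - a)) (b - x) =
        List.range' a ((b - x) + (x - a)) := by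
          rw [Nat.add_comm (b - x)]; exact List.range'_append
    have e2 : a + 1 * (x - a) = x := by omega
    have e3 : (b - x) + (x - a) = b - a := by omega
    have e4 : b - x = (b - x - 1) + 1 := by omega
    have e5 : b - x - 1 = b - (x + 1) := by omega
    have : List.range' a (b - a) = List.range' a (x - a) ++ (x :: List.range' (x + 1) (b - (x + 1))) := by
      rw [← e3, ← e1, e2]
      congr 1
      rw [e4, List.range'_succ, e5]
    rw [this]
    exact List.Sublist.trans (List.Sublist.cons₂ x ht) (List.sublist_append_right _ _)

lemma map_val_sublist {n : ℕ} {l L : List (Fin n)}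
    (h : (l.map Fin.val).Sublist (L.map Fin.val)) : l.Sublist L := by
  obtain ⟨l', hl', he⟩ := List.sublist_map_iff.mp h
  have : l = l' := List.map_injective_iff.mpr Fin.val_injective he
  rwa [this]

lemma incr_sublist_upBlock {n : ℕ} (l : List (Fin n)) (hp : List.Pairwise (· < ·) l)
    (h0 : ∀ x ∈ l, x.val ≠ 0) : l.Sublist (upBlock n) := by
  apply map_val_sublist
  have hub : (upBlock n).map Fin.val = List.range' 1 (n - 1) := by
    unfold upBlock
    rw [List.map_drop, List.map_coe_finRange_eq_range]
    rcases Nat.eq_zero_or_pos n with h | h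
    · subst h; simp
    · have : List.range n = List.range' 0 1 ++ List.range' 1 (n - 1) := by
        rw [List.range_eq_range']
        have := List.range'_append (s := 0) (m := 1) (n := n - 1) (step := 1)
        simp only [Nat.mul_one, Nat.zero_add] at this
        rw [this]
        congr 1
        omega
      rw [this]
      simp
  rw [hub]
  have : n - 1 = n - 1 := rfl
  refine natInc _ 1 n ?_ ?_
  · exact List.pairwise_map.mpr (by exact hp.imp (fun h => h))
  · intro x hx
    simp only [List.mem_map] at hx
    obtain ⟨y, hy, rfl⟩ := hx
    exact ⟨Nat.one_le_iff_ne_zero.mpr (h0 y hy), y.isLt⟩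

lemma decr_sublist_downBlock {n : ℕ} (l : List (Fin n)) (hp : List.Pairwise (· > ·) l)
    (htop : ∀ x ∈ l, x.val ≠ n - 1) : l.Sublist (downBlock n) := by
  unfold downBlock
  have : l = l.reverse.reverse := (List.reverse_reverse l).symm
  rw [this]
  apply List.Sublist.reverse
  apply map_val_sublist
  have hdb : (((List.finRange n).take (n - 1)).map Fin.val) = List.range' 0 (n - 1) := by
    rw [List.map_take, List.map_coe_finRange_eq_range, List.take_range, ← List.range_eq_range']
    congr 1
    omega
  rw [hdb]
  have h0 : (0 : ℕ) = 0 := rfl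
  have : n - 1 = n - 1 - 0 := rfl
  rw [show n - 1 = n - 1 - 0 by omega]
  refine natInc _ 0 (n - 1) ?_ ?_
  · rw [List.pairwise_map, List.pairwise_reverse]
    exact hp.imp (fun h => h)
  · intro x hx
    simp only [List.mem_map, List.mem_reverse] at hx
    obtain ⟨y, hy, rfl⟩ := hx
    have := htop y hy
    have := y.isLt
    omega

/-- Alternating blocks, starting with `upBlock` when `b = true`. -/
def blocksAux (n : ℕ) : ℕ → Bool → List (Fin n)
  | 0, _ => []
  | m + 1, b => (if b then upBlock n else downBlock n) ++ blocksAux n m (!b)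

lemma flatMap_eq_blocksAux (n : ℕ) : ∀ (m : ℕ) (b : Bool),
    (List.range m).flatMap
      (fun k => if k % 2 = 0 then (if b then upBlock n else downBlock n)
        else (if b then downBlock n else upBlock n)) = blocksAux n m b := by
  intro m
  induction m with
  | zero => intro b; simp [blocksAux]
  | succ m ih =>
    intro b
    rw [List.range_succ_eq_map, List.flatMap_cons]
    simp only [Nat.zero_mod, if_pos rfl]
    rw [blocksAux]
    congr 1
    rw [List.flatMap_map]
    rw [← ih (!b)]
    apply List.flatMap_congr
    intro k _
    have : (Nat.succ k) % 2 = 0 ↔ ¬ (k % 2 = 0) := by omega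
    by_cases hk : k % 2 = 0
    · rw [if_pos hk, if_neg (by omega : ¬ (Nat.succ k) % 2 = 0)]
      cases b <;> simp
    · rw [if_neg hk, if_pos (by omega : (Nat.succ k) % 2 = 0)]
      cases b <;> simp

/-- Main embedding lemma: any word with no two adjacent equal letters and the
appropriate head condition embeds into the alternating blocks. -/
lemma main_embed {n : ℕ} : ∀ (m : ℕ) (b : Bool) (w : List (Fin n)),
    w.Chain' (· ≠ ·) → w.length ≤ m →
    (∀ h ∈ w.head?, if b then h.val ≠ 0 else h.val ≠ n - 1) →
    w.Sublist (blocksAux n m b) := by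
  intro m
  induction m with
  | zero =>
    intro b w _ hl _
    rw [Nat.le_zero, List.length_eq_zero_iff] at hl
    subst hl; exact List.nil_sublist _
  | succ m ih =>
    intro b w hc hl hh
    cases w with
    | nil => exact List.nil_sublist _
    | cons a t =>
      have hha := hh a (by simp)
      cases b with
      | true =>
        -- up block: split off maximal increasing run
        set R : Fin n → Fin n → Prop := (· < ·) with hR
        have hsplit := runSplit_append R (a :: t)
        set r := (runSplit R (a :: t)).1 with hr
        set s := (runSplit R (a :: t)).2 with hs
        obtain ⟨r', hr'⟩ := runSplit_fst_cons R a t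
        have hra : r = a :: r' := by rw [hr, hr']
        have hchain_r : List.Chain' R r := runSplit_fst_chain R (a :: t)
        have hpr : List.Pairwise R r := List.isChain_iff_pairwise.mp hchain_r
        have hne : List.Chain' (· ≠ ·) (r ++ s) := by rw [hsplit]; exact hc
        -- r sublist of upBlock
        have hrup : r.Sublist (upBlock n) := by
          apply incr_sublist_upBlock _ hpr
          intro x hx
          rw [hra] at hx
          rcases List.mem_cons.mp hx with h | h
          · subst h; simpa using hha
          · have : a < x := by
              have hpr2 := hpr
              rw [hra] at hpr2
              exact (List.pairwise_cons.mp hpr2).1 x h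
            have hane : a.val ≠ 0 := by simpa using hha
            omega
        -- s facts
        have hcs : List.Chain' (· ≠ ·) s := hne.right_of_append
        have hls : s.length ≤ m := by
          have : r.length + s.length = t.length + 1 := by
            rw [← List.length_append, hsplit]; simp
          have hrlen : 1 ≤ r.length := by rw [hra]; simp
          simp only [List.length_cons] at hl
          omega
        have hhs : ∀ h ∈ s.head?, if false then h.val ≠ 0 else h.val ≠ n - 1 := by
          intro c hcmem
          cases hs2 : s with
          | nil => rw [hs2] at hcmem; simp at hcmem
          | cons c' s' =>
            rw [hs2] at hcmem
            simp only [List.head?_cons, Option.mem_def, Option.some.injEq] at hcmem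
            subst hcmem
            obtain ⟨la, hla1, hla2⟩ := runSplit_boundary R (a :: t) c' s' (by rw [← hs, hs2])
            have hlac : la ≠ c' := by
              have := (List.isChain_append.mp hne).2.2
              exact this la (by rw [← hr] at hla1; exact hla1) c' (by rw [hs2]; simp)
            have : c' < la := lt_of_le_of_ne (not_lt.mp hla2) hlac.symm
            have : c'.val < la.val := this
            have := la.isLt
            simp only [if_false, Bool.false_eq_true]
            omega
        have hss : s.Sublist (blocksAux n m false) := ih false s hcs hls hhs
        have : (a :: t) = r ++ s := hsplit.symm
        rw [this]
        show (r ++ s).Sublist (blocksAux n (m+1) true)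
        rw [blocksAux]
        simpa using List.Sublist.append hrup hss
      | false =>
        -- down block: split off maximal decreasing run
        set R : Fin n → Fin n → Prop := (· > ·) with hR
        have hsplit := runSplit_append R (a :: t)
        set r := (runSplit R (a :: t)).1 with hr
        set s := (runSplit R (a :: t)).2 with hs
        obtain ⟨r', hr'⟩ := runSplit_fst_cons R a t
        have hra : r = a :: r' := by rw [hr, hr']
        have hchain_r : List.Chain' R r := runSplit_fst_chain R (a :: t)
        have hpr : List.Pairwise R r := List.isChain_iff_pairwise.mp hchain_r
        have hne : List.Chain' (· ≠ ·) (r ++ s) := by rw [hsplit]; exact hc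
        have hrdown : r.Sublist (downBlock n) := by
          apply decr_sublist_downBlock _ hpr
          intro x hx
          rw [hra] at hx
          have hane : a.val ≠ n - 1 := by simpa using hha
          have han : a.val < n := a.isLt
          rcases List.mem_cons.mp hx with h | h
          · subst h; omega
          · have hxa : x < a := by
              have hpr2 := hpr
              rw [hra] at hpr2
              exact (List.pairwise_cons.mp hpr2).1 x h
            have : x.val < a.val := hxa
            omega
        have hcs : List.Chain' (· ≠ ·) s := hne.right_of_append
        have hls : s.length ≤ m := by
          have : r.length + s.length = t.length + 1 := by
            rw [← List.length_append, hsplit]; simp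
          have hrlen : 1 ≤ r.length := by rw [hra]; simp
          simp only [List.length_cons] at hl
          omega
        have hhs : ∀ h ∈ s.head?, if true then h.val ≠ 0 else h.val ≠ n - 1 := by
          intro c hcmem
          cases hs2 : s with
          | nil => rw [hs2] at hcmem; simp at hcmem
          | cons c' s' =>
            rw [hs2] at hcmem
            simp only [List.head?_cons, Option.mem_def, Option.some.injEq] at hcmem
            subst hcmem
            obtain ⟨la, hla1, hla2⟩ := runSplit_boundary R (a :: t) c' s' (by rw [← hs, hs2])
            have hlac : la ≠ c' := by
              have := (List.isChain_append.mp hne).2.2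
              exact this la (by rw [← hr] at hla1; exact hla1) c' (by rw [hs2]; simp)
            have : la < c' := lt_of_le_of_ne (not_lt.mp hla2) hlac
            have : la.val < c'.val := this
            simp only [if_true]
            omega
        have hss : s.Sublist (blocksAux n m true) := ih true s hcs hls hhs
        have : (a :: t) = r ++ s := hsplit.symm
        rw [this]
        show (r ++ s).Sublist (blocksAux n (m+1) false)
        rw [blocksAux]
        simpa using List.Sublist.append hrdown hss

lemma pathWord_facts {n : ℕ} {w : List (Fin n)} (h : IsPathWord n w) :
    w.Chain' (· ≠ ·) ∧ w.length ≤ 2 ^ n - 1 := by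
  obtain ⟨xs, hnd, hlen, hstep⟩ := h
  constructor
  · rw [List.Chain', List.isChain_iff_getElem]
    intro i hi
    intro heq
    have hi1 : i < w.length := by omega
    have hi2 : i + 1 < w.length := by omega
    change w.get ⟨i, hi1⟩ = w.get ⟨i + 1, hi2⟩ at heq
    have h1 := hstep i hi1
    have h2 := hstep (i + 1) hi2
    rw [← heq] at h2
    set j := w.get ⟨i, hi1⟩ with hj
    have hx1j : xs.getD (i + 1) default j = !(xs.getD i default j) := by
      rw [h1]; simp
    have key : xs.getD (i + 1 + 1) default = xs.getD i default := by
      funext k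
      by_cases hk : k = j
      · subst hk
        rw [h2, Function.update_self, hx1j, Bool.not_not]
      · rw [h2, Function.update_of_ne hk, h1, Function.update_of_ne hk]
    have e1 : i < xs.length := by omega
    have e2 : i + 1 + 1 < xs.length := by omega
    rw [List.getD_eq_getElem xs default e2, List.getD_eq_getElem xs default e1] at key
    have hinj := List.nodup_iff_injective_get.mp hnd
    have : (⟨i + 1 + 1, e2⟩ : Fin xs.length) = ⟨i, e1⟩ := by
      apply hinj
      simpa using key
    simp only [Fin.mk.injEq] at this
    omega
  · have hcard := hnd.length_le_card
    have hc2 : Fintype.card (Fin n → Bool) = 2 ^ n := by simp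
    omega

/-- `zigzagWord n` is `n`-path-universal and has length at most
`(n-1)(2^n - 1) + 1`; in particular such a word exists. -/
theorem pathUniversal_upper_bound (n : ℕ) (hn : 1 ≤ n) :
    PathUniversal n (zigzagWord n) ∧
      (zigzagWord n).length ≤ (n - 1) * (2 ^ n - 1) + 1 := by
  have hblocks : zigzagWord n = (List.finRange n).take 1 ++ blocksAux n (2 ^ n - 1) true := by
    unfold zigzagWord
    congr 1
    rw [← flatMap_eq_blocksAux n (2 ^ n - 1) true]
    apply List.flatMap_congr
    intro k _
    by_cases hk : k % 2 = 0 <;> simp [hk]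
  have htake : (List.finRange n).take 1 = [(⟨0, hn⟩ : Fin n)] := by
    obtain ⟨k, rfl⟩ : ∃ k, n = k + 1 := ⟨n - 1, by omega⟩
    rw [List.finRange_succ]
    simp
  constructor
  · intro w hpw
    obtain ⟨hchain, hlen⟩ := pathWord_facts hpw
    rw [hblocks, htake]
    cases w with
    | nil => exact List.nil_sublist _
    | cons a t =>
      by_cases ha : a = ⟨0, hn⟩
      · subst ha
        have hc' := List.isChain_cons.mp hchain
        have ht : t.Sublist (blocksAux n (2 ^ n - 1) true) := by
          apply main_embed _ true t hc'.2 (by simp only [List.length_cons] at hlen; omega)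
          intro h hh
          have hne := hc'.1 h hh
          simp only [if_true]
          intro h0
          exact hne (Fin.ext h0.symm)
        exact List.Sublist.cons₂ _ ht
      · have hw : (a :: t).Sublist (blocksAux n (2 ^ n - 1) true) := by
          apply main_embed _ true _ hchain hlen
          intro h hh
          simp only [List.head?_cons, Option.mem_def, Option.some.injEq] at hh
          subst hh
          simp only [if_true]
          intro h0
          exact ha (Fin.ext h0)
        exact hw.trans (List.sublist_append_right _ _)
  · have hup : (upBlock n).length = n - 1 := by simp [upBlock]
    have hdown : (downBlock n).length = n - 1 := by
      simp only [downBlock, List.length_reverse, List.length_take, List.length_finRange]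
      omega
    unfold zigzagWord
    rw [List.length_append, List.length_flatMap]
    have hmap : List.map (List.length ∘ fun k => if k % 2 = 0 then upBlock n else downBlock n)
        (List.range (2 ^ n - 1)) = List.replicate (2 ^ n - 1) (n - 1) := by
      rw [List.eq_replicate_iff]
      constructor
      · simp
      · intro b hb
        simp only [List.mem_map] at hb
        obtain ⟨k, _, rfl⟩ := hb
        by_cases hk : k % 2 = 0 <;> simp [hk, hup, hdown]
    erw [hmap, List.sum_replicate, smul_eq_mul, List.length_take, List.length_finRange]
    have h1 : min 1 n = 1 := by omega
    rw [h1, Nat.mul_comm]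
    omega
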